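/- Let f : ℝⁿ → ℝ be differentiable with gradient g = ∇f, let μ > 0 and τ > 0, fix x ∈ ℝⁿ and an n×n matrix H with operator norm ‖H‖. Define F_q(x;y) = g(x) + H(y − x) − P_{[−μ,μ]}(g(x) + H(y − x) − y/τ) and F(x) = F_q(x;x) = g(x) − P_{[−μ,μ]}(g(x) − x/τ). Then for every x̂ ∈ ℝⁿ, ‖F_q(x;x̂) − F(x)‖ ≤ (1/τ + 2‖H‖)‖x̂ − x‖. -/

import Mathlib

open scoped RealInnerProductSpace

variable {n : ℕ}
local notation "E" => EuclideanSpace ℝ (Fin n)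
local notation "CLM" => Matrix.toEuclideanCLM (𝕜 := ℝ)

private lemma clamp_lip (μ a b : ℝ) :
    |max (-μ) (min μ a) - max (-μ) (min μ b)| ≤ |a - b| := by
  calc |max (-μ) (min μ a) - max (-μ) (min μ b)|
      ≤ |min μ a - min μ b| := by
        simpa [max_comm] using abs_max_sub_max_le_abs (min μ a) (min μ b) (-μ)
    _ ≤ |a - b| := by
        simpa using abs_min_sub_min_le_max μ a μ b

private lemma norm_le_of_abs_le (p q : EuclideanSpace ℝ (Fin n))
    (h : ∀ i, |p i| ≤ |q i|) : ‖p‖ ≤ ‖q‖ := by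
  rw [EuclideanSpace.norm_eq, EuclideanSpace.norm_eq]
  apply Real.sqrt_le_sqrt
  apply Finset.sum_le_sum
  intro i _
  have := h i
  simpa [Real.norm_eq_abs, sq_abs] using pow_le_pow_left₀ (abs_nonneg _) this 2

/-- `‖F_q(x;x̂) - F(x)‖ ≤ (1/τ + 2‖H‖)‖x̂ - x‖`, where `F(x) = F_q(x;x)`. -/
theorem stmt_3
    (f : E → ℝ) (g : E → E)
    (hg : ∀ y, HasGradientAt f (g y) y)
    (μ τ : ℝ) (hμ : 0 < μ) (hτ : 0 < τ)
    (x : E)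
    (H : Matrix (Fin n) (Fin n) ℝ)
    (Fq : E → E)
    (hFq : ∀ y i, Fq y i =
      g x i + CLM H (y - x) i -
        max (-μ) (min μ (g x i + CLM H (y - x) i - y i / τ)))
    (xh : E) :
    ‖Fq xh - Fq x‖ ≤ (1 / τ + 2 * ‖CLM H‖) * ‖xh - x‖ := by
  set d : E := xh - x with hd
  set p : E := (WithLp.toLp 2 (fun i => max (-μ) (min μ (g x i + CLM H d i - xh i / τ))
      - max (-μ) (min μ (g x i - x i / τ))) : EuclideanSpace ℝ (Fin n)) with hp
  set q : E := CLM H d - τ⁻¹ • d with hq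
  have key : Fq xh - Fq x = CLM H d - p := by
    ext i
    have h1 := hFq xh i
    have h2 := hFq x i
    simp only [sub_self, map_zero] at h2
    simp [h1, h2, hp, hd]
    ring
  have hpq : ‖p‖ ≤ ‖q‖ := by
    apply norm_le_of_abs_le
    intro i
    have := clamp_lip μ (g x i + CLM H d i - xh i / τ) (g x i - x i / τ)
    have heq : (g x i + CLM H d i - xh i / τ) - (g x i - x i / τ) = q i := by
      simp [hq, hd, PiLp.sub_apply, PiLp.smul_apply, smul_eq_mul]
      ring
    rw [← heq]; exact this
  have hHd : ‖CLM H d‖ ≤ ‖CLM H‖ * ‖d‖ := (CLM H).le_opNorm d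
  have hqn : ‖q‖ ≤ ‖CLM H‖ * ‖d‖ + τ⁻¹ * ‖d‖ := by
    calc ‖q‖ ≤ ‖CLM H d‖ + ‖τ⁻¹ • d‖ := norm_sub_le _ _
      _ ≤ ‖CLM H‖ * ‖d‖ + τ⁻¹ * ‖d‖ := by
          rw [norm_smul]
          gcongr
          simp [Real.norm_eq_abs, abs_of_pos hτ]
  calc ‖Fq xh - Fq x‖ = ‖CLM H d - p‖ := by rw [key]
    _ ≤ ‖CLM H d‖ + ‖p‖ := norm_sub_le _ _
    _ ≤ ‖CLM H‖ * ‖d‖ + (‖CLM H‖ * ‖d‖ + τ⁻¹ * ‖d‖) := by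
        gcongr; exact hpq.trans hqn
    _ = (1 / τ + 2 * ‖CLM H‖) * ‖d‖ := by ring
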